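/- Let K̄ := {(a,b) ∈ ℝ² : |b| ≤ a} and define u(a,b) := ∫_{−1}^{1} √(a + bs)·(s+1)^{3/2} ds for (a,b) ∈ K̄. Then u is finite at every point of K̄, concave on K̄, and continuous on K̄. -/

import Mathlib

open MeasureTheory

private lemma rpow_cont : Continuous fun s : ℝ => (s + 1) ^ ((3 : ℝ) / 2) := by
  rw [continuous_iff_continuousAt]
  intro x
  exact (Real.continuousAt_rpow_const _ _ (Or.inr (by norm_num))).comp
    (continuousAt_id.add continuousAt_const)

private lemma arg_nonneg {a b s : ℝ} (h : |b| ≤ a) (h1 : -1 ≤ s) (h2 : s ≤ 1) :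
    0 ≤ a + b * s := by
  obtain ⟨hb1, hb2⟩ := abs_le.mp h
  nlinarith [mul_nonneg (by linarith : (0:ℝ) ≤ a + b) (by linarith : (0:ℝ) ≤ 1 + s),
    mul_nonneg (by linarith : (0:ℝ) ≤ a - b) (by linarith : (0:ℝ) ≤ 1 - s)]

theorem stmt4 (u : ℝ × ℝ → ℝ)
    (hu : ∀ w : ℝ × ℝ, u w = ∫ s in (-1 : ℝ)..1, Real.sqrt (w.1 + w.2 * s) * (s + 1) ^ ((3 : ℝ) / 2))
    (K : Set (ℝ × ℝ)) (hK : K = {w : ℝ × ℝ | |w.2| ≤ w.1}) :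
    (∀ w ∈ K, IntervalIntegrable
        (fun s : ℝ => Real.sqrt (w.1 + w.2 * s) * (s + 1) ^ ((3 : ℝ) / 2)) volume (-1) 1) ∧
      ConcaveOn ℝ K u ∧ ContinuousOn u K := by
  have hcont : ∀ w : ℝ × ℝ, Continuous fun s : ℝ =>
      Real.sqrt (w.1 + w.2 * s) * (s + 1) ^ ((3 : ℝ) / 2) := fun w =>
    (Real.continuous_sqrt.comp (continuous_const.add (continuous_const.mul continuous_id))).mul
      rpow_cont
  have hint : ∀ w : ℝ × ℝ, IntervalIntegrable
      (fun s : ℝ => Real.sqrt (w.1 + w.2 * s) * (s + 1) ^ ((3 : ℝ) / 2)) volume (-1) 1 :=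
    fun w => (hcont w).intervalIntegrable _ _
  refine ⟨fun w _ => hint w, ⟨?_, ?_⟩, ?_⟩
  · -- convexity of K
    subst hK
    intro x hx y hy t t' ht ht' htt'
    simp only [Set.mem_setOf_eq] at hx hy ⊢
    have : |(t • x + t' • y).2| ≤ t * |x.2| + t' * |y.2| := by
      simp only [Prod.snd_add, Prod.smul_snd, smul_eq_mul]
      calc |t * x.2 + t' * y.2| ≤ |t * x.2| + |t' * y.2| := abs_add_le _ _
        _ = t * |x.2| + t' * |y.2| := by
            rw [abs_mul, abs_mul, abs_of_nonneg ht, abs_of_nonneg ht']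
    have h2 : t * |x.2| + t' * |y.2| ≤ (t • x + t' • y).1 := by
      simp only [Prod.fst_add, Prod.smul_fst, smul_eq_mul]
      have := mul_le_mul_of_nonneg_left hx ht
      have := mul_le_mul_of_nonneg_left hy ht'
      linarith
    exact this.trans h2
  · -- concavity inequality
    intro w hw v hv t t' ht ht' htt'
    rw [hK, Set.mem_setOf_eq] at hw hv
    rw [hu, hu, hu]
    simp only [smul_eq_mul]
    rw [← intervalIntegral.integral_const_mul, ← intervalIntegral.integral_const_mul,
      ← intervalIntegral.integral_add
        (((hcont w).intervalIntegrable _ _).const_mul t)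
        (((hcont v).intervalIntegrable _ _).const_mul t')]
    apply intervalIntegral.integral_mono_on (by norm_num : (-1:ℝ) ≤ 1)
      (((continuous_const.mul (hcont w)).add
        (continuous_const.mul (hcont v))).intervalIntegrable _ _)
      (hint _)
    intro s hs
    obtain ⟨hs1, hs2⟩ := hs
    have hA : (0:ℝ) ≤ w.1 + w.2 * s := arg_nonneg hw hs1 hs2
    have hB : (0:ℝ) ≤ v.1 + v.2 * s := arg_nonneg hv hs1 hs2
    have hc : (0:ℝ) ≤ (s + 1) ^ ((3:ℝ)/2) := Real.rpow_nonneg (by linarith) _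
    have hsqrt : t * Real.sqrt (w.1 + w.2 * s) + t' * Real.sqrt (v.1 + v.2 * s) ≤
        Real.sqrt (t * (w.1 + w.2 * s) + t' * (v.1 + v.2 * s)) := by
      have := Real.strictConcaveOn_sqrt.concaveOn.2 (Set.mem_Ici.mpr hA)
        (Set.mem_Ici.mpr hB) ht ht' htt'
      simpa [smul_eq_mul] using this
    have harg : (t • w + t' • v).1 + (t • w + t' • v).2 * s =
        t * (w.1 + w.2 * s) + t' * (v.1 + v.2 * s) := by
      simp only [Prod.fst_add, Prod.smul_fst, Prod.snd_add, Prod.smul_snd, smul_eq_mul]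
      ring
    calc t * (Real.sqrt (w.1 + w.2 * s) * (s + 1) ^ ((3:ℝ)/2)) +
          t' * (Real.sqrt (v.1 + v.2 * s) * (s + 1) ^ ((3:ℝ)/2))
        = (t * Real.sqrt (w.1 + w.2 * s) + t' * Real.sqrt (v.1 + v.2 * s)) *
            (s + 1) ^ ((3:ℝ)/2) := by ring
      _ ≤ Real.sqrt (t * (w.1 + w.2 * s) + t' * (v.1 + v.2 * s)) * (s + 1) ^ ((3:ℝ)/2) :=
          mul_le_mul_of_nonneg_right hsqrt hc
      _ = Real.sqrt ((t • w + t' • v).1 + (t • w + t' • v).2 * s) * (s + 1) ^ ((3:ℝ)/2) := by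
          rw [harg]
  · -- continuity
    have : Continuous u := by
      have := intervalIntegral.continuous_parametric_intervalIntegral_of_continuous'
        (μ := volume)
        (f := fun (w : ℝ × ℝ) (s : ℝ) => Real.sqrt (w.1 + w.2 * s) * (s + 1) ^ ((3 : ℝ) / 2))
        (by
          apply Continuous.mul
          · exact Real.continuous_sqrt.comp
              ((continuous_fst.fst).add ((continuous_fst.snd).mul continuous_snd))
          · exact rpow_cont.comp continuous_snd)
        (-1) 1
      convert this using 1
      funext w
      exact hu w
    exact this.continuousOn
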